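/- Let V be a finite set, let F be an edge set on V forming a forest, and let f be a function from subsets of V to {0,1} satisfying f(V)=0, symmetry (f(S)=f(V\S) for all S⊆V), and disjunctivity (if A,B⊆V are disjoint and f(A)=f(B)=0 then f(A∪B)=0). Suppose f(C)=0 for every connected component C of (V,F). Define the pruned edge set F' = {e∈F : some connected component N of the graph (V, F\{e}) satisfies f(N)=1}. Then every connected component N of the graph (V,F') satisfies f(N)=0. -/

import Mathlib

open SimpleGraph

section helpers

variable {V : Type*}

private lemma acyclic_mono' {G H : SimpleGraph V} (h : G ≤ H) (hH : H.IsAcyclic) : G.IsAcyclic :=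
  fun _ c hc => hH (c.mapLe h) (hc.mapLe h)

private lemma supp_eq' (G : SimpleGraph V) (x : V) :
    (G.connectedComponentMk x).supp = {y | G.Reachable x y} := by
  ext y
  simp [ConnectedComponent.mem_supp_iff, ConnectedComponent.eq, reachable_comm]

private lemma forall_comp_zero (G : SimpleGraph V) (f : Set V → ℕ) :
    (∀ N : G.ConnectedComponent, f N.supp = 0) ↔ ∀ x : V, f {y | G.Reachable x y} = 0 := by
  constructor
  · intro h x
    simpa [supp_eq'] using h (G.connectedComponentMk x)
  · intro h N
    induction N using ConnectedComponent.ind with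
    | _ x => simpa [supp_eq'] using h x

private lemma exists_comp_one (G : SimpleGraph V) (f : Set V → ℕ) :
    (∃ N : G.ConnectedComponent, f N.supp = 1) ↔ ∃ x : V, f {y | G.Reachable x y} = 1 := by
  constructor
  · rintro ⟨N, hN⟩
    induction N using ConnectedComponent.ind with
    | _ x => exact ⟨x, by simpa [supp_eq'] using hN⟩
  · rintro ⟨x, hx⟩
    exact ⟨G.connectedComponentMk x, by simpa [supp_eq'] using hx⟩

private lemma fromEdgeSet_diff_diag' (S : Set (Sym2 V)) {e : Sym2 V} (he : e.IsDiag) :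
    SimpleGraph.fromEdgeSet (S \ {e}) = SimpleGraph.fromEdgeSet S := by
  ext x y
  simp only [fromEdgeSet_adj, Set.mem_diff, Set.mem_singleton_iff]
  constructor
  · rintro ⟨⟨h1, _⟩, h2⟩; exact ⟨h1, h2⟩
  · rintro ⟨h1, h2⟩
    refine ⟨⟨h1, fun hc => h2 ?_⟩, h2⟩
    subst hc
    exact Sym2.mk_isDiag_iff.mp he

private lemma reach_split' (S : Set (Sym2 V)) (u v : V) :
    ∀ {x y : V}, (SimpleGraph.fromEdgeSet S).Walk x y →
      (SimpleGraph.fromEdgeSet (S \ {s(u,v)})).Reachable x y ∨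
      ((SimpleGraph.fromEdgeSet (S \ {s(u,v)})).Reachable x u ∧
        (SimpleGraph.fromEdgeSet (S \ {s(u,v)})).Reachable v y) ∨
      ((SimpleGraph.fromEdgeSet (S \ {s(u,v)})).Reachable x v ∧
        (SimpleGraph.fromEdgeSet (S \ {s(u,v)})).Reachable u y) := by
  intro x y w
  set G := SimpleGraph.fromEdgeSet (S \ {s(u,v)}) with hG
  induction w with
  | nil => exact Or.inl (Reachable.refl _)
  | @cons a b c h p ih =>
    rw [fromEdgeSet_adj] at h
    by_cases he : s(a, b) = s(u, v)
    · rcases Sym2.eq_iff.mp he with ⟨rfl, rfl⟩ | ⟨rfl, rfl⟩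
      · rcases ih with h1 | ⟨h1, h2⟩ | ⟨h1, h2⟩
        · exact Or.inr (Or.inl ⟨Reachable.refl _, h1⟩)
        · exact Or.inl (h1.symm.trans h2)
        · exact Or.inl h2
      · rcases ih with h1 | ⟨h1, h2⟩ | ⟨h1, h2⟩
        · exact Or.inr (Or.inr ⟨Reachable.refl _, h1⟩)
        · exact Or.inl h2
        · exact Or.inl (h1.symm.trans h2)
    · have hab : G.Adj a b := by
        rw [hG, fromEdgeSet_adj]
        exact ⟨⟨h.1, he⟩, h.2⟩
      have hr : G.Reachable a b := hab.reachable
      rcases ih with h1 | ⟨h1, h2⟩ | ⟨h1, h2⟩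
      · exact Or.inl (hr.trans h1)
      · exact Or.inr (Or.inl ⟨hr.trans h1, h2⟩)
      · exact Or.inr (Or.inr ⟨hr.trans h1, h2⟩)

private lemma reach_mono'' (S : Set (Sym2 V)) (a b : V) {x y : V}
    (h : (SimpleGraph.fromEdgeSet (S \ {s(a,b)})).Reachable x y) :
    (SimpleGraph.fromEdgeSet S).Reachable x y :=
  h.mono (fromEdgeSet_mono Set.diff_subset)

private lemma comp_eq_of_not_reach' (S : Set (Sym2 V)) (a b : V) {x : V}
    (hxa : ¬ (SimpleGraph.fromEdgeSet (S \ {s(a,b)})).Reachable x a)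
    (hxb : ¬ (SimpleGraph.fromEdgeSet (S \ {s(a,b)})).Reachable x b) :
    {y | (SimpleGraph.fromEdgeSet S).Reachable x y} =
      {y | (SimpleGraph.fromEdgeSet (S \ {s(a,b)})).Reachable x y} := by
  ext y
  simp only [Set.mem_setOf_eq]
  constructor
  · intro h
    obtain ⟨w⟩ := h
    rcases reach_split' S a b w with h1 | ⟨h1, _⟩ | ⟨h1, _⟩
    · exact h1
    · exact absurd h1 hxa
    · exact absurd h1 hxb
  · exact reach_mono'' S a b

private lemma comp_eq_of_reach_both' (S : Set (Sym2 V)) (a b : V) {x : V}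
    (hab : (SimpleGraph.fromEdgeSet (S \ {s(a,b)})).Reachable a b) :
    {y | (SimpleGraph.fromEdgeSet S).Reachable x y} =
      {y | (SimpleGraph.fromEdgeSet (S \ {s(a,b)})).Reachable x y} := by
  ext y
  simp only [Set.mem_setOf_eq]
  constructor
  · intro h
    obtain ⟨w⟩ := h
    rcases reach_split' S a b w with h1 | ⟨h1, h2⟩ | ⟨h1, h2⟩
    · exact h1
    · exact (h1.trans hab).trans h2
    · exact (h1.trans hab.symm).trans h2
  · exact reach_mono'' S a b

private lemma comp_union_of_reach' (S : Set (Sym2 V)) (a b : V) {x : V}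
    (hmem : s(a,b) ∈ S) (hne : a ≠ b)
    (hxa : (SimpleGraph.fromEdgeSet (S \ {s(a,b)})).Reachable x a) :
    {y | (SimpleGraph.fromEdgeSet S).Reachable x y} =
      {y | (SimpleGraph.fromEdgeSet (S \ {s(a,b)})).Reachable x y} ∪
      {y | (SimpleGraph.fromEdgeSet (S \ {s(a,b)})).Reachable b y} := by
  ext y
  simp only [Set.mem_setOf_eq, Set.mem_union]
  constructor
  · intro h
    obtain ⟨w⟩ := h
    rcases reach_split' S a b w with h1 | ⟨h1, h2⟩ | ⟨h1, h2⟩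
    · exact Or.inl h1
    · exact Or.inr h2
    · exact Or.inl (hxa.trans h2)
  · rintro (h | h)
    · exact reach_mono'' S a b h
    · have hadj : (SimpleGraph.fromEdgeSet S).Adj a b := by
        rw [fromEdgeSet_adj]; exact ⟨hmem, hne⟩
      exact ((reach_mono'' S a b hxa).trans hadj.reachable).trans (reach_mono'' S a b h)

private lemma reach_set_eq' {G : SimpleGraph V} {x u : V} (h : G.Reachable x u) :
    {y | G.Reachable x y} = {y | G.Reachable u y} := by
  ext y; exact ⟨fun hy => h.symm.trans hy, fun hy => h.trans hy⟩

private lemma reach_disj' {G : SimpleGraph V} {x z : V} (h : ¬ G.Reachable x z) :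
    Disjoint {y | G.Reachable x y} {y | G.Reachable z y} :=
  Set.disjoint_left.mpr fun _ h1 h2 => h (h1.trans h2.symm)

variable {f : Set V → ℕ}

private lemma f_subtract (hsymm : ∀ S : Set V, f S = f Sᶜ)
    (hdisj : ∀ A B : Set V, Disjoint A B → f A = 0 → f B = 0 → f (A ∪ B) = 0)
    {A B : Set V} (hAB : Disjoint A B) (hU : f (A ∪ B) = 0) (hB : f B = 0) : f A = 0 := by
  have h1 : f (A ∪ B)ᶜ = 0 := by rw [← hsymm]; exact hU
  have h2 : Disjoint ((A ∪ B)ᶜ) B :=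
    Set.disjoint_left.mpr fun y hy hyB => hy (Or.inr hyB)
  have h3 : f ((A ∪ B)ᶜ ∪ B) = 0 := hdisj _ _ h2 h1 hB
  have h4 : (A ∪ B)ᶜ ∪ B = Aᶜ := by
    have hd := Set.disjoint_left.mp hAB
    ext y
    simp only [Set.mem_union, Set.mem_compl_iff]
    constructor
    · rintro (h | h)
      · exact fun hA => h (Or.inl hA)
      · exact fun hA => hd hA h
    · intro h
      by_cases hB' : y ∈ B
      · exact Or.inr hB'
      · exact Or.inl (fun hc => hc.elim h hB')
  rw [hsymm, ← h4]
  exact h3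

private lemma f_one (hrange : ∀ S : Set V, f S = 0 ∨ f S = 1)
    (hsymm : ∀ S : Set V, f S = f Sᶜ)
    (hdisj : ∀ A B : Set V, Disjoint A B → f A = 0 → f B = 0 → f (A ∪ B) = 0)
    {A B : Set V} (hAB : Disjoint A B) (hA : f A = 1) (hU : f (A ∪ B) = 0) : f B = 1 := by
  rcases hrange B with hB | hB
  · have := f_subtract hsymm hdisj hAB hU hB
    omega
  · exact hB

private lemma f_one' (hrange : ∀ S : Set V, f S = 0 ∨ f S = 1)
    (hdisj : ∀ A B : Set V, Disjoint A B → f A = 0 → f B = 0 → f (A ∪ B) = 0)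
    {A B : Set V} (hAB : Disjoint A B) (hA : f A = 0) (hU : f (A ∪ B) = 1) : f B = 1 := by
  rcases hrange B with hB | hB
  · have := hdisj _ _ hAB hA hB
    omega
  · exact hB

end helpers

section key

variable {V : Type*} {f : Set V → ℕ}

/-- Core of the hard direction: the deleted edge `s(u,v)` attaches the component
of `u` (with `f = 1`) to the component `B` of `v`, which also has `f = 1`;
the other pruned edge `s(u',v')` has an endpoint `u'` in `B`. -/
private lemma key2 (hrange : ∀ S : Set V, f S = 0 ∨ f S = 1)
    (hsymm : ∀ S : Set V, f S = f Sᶜ)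
    (hdisj : ∀ A B : Set V, Disjoint A B → f A = 0 → f B = 0 → f (A ∪ B) = 0)
    (S' Se T : Set (Sym2 V)) (u v u' v' : V)
    (hTS' : T = S' \ {s(u,v)}) (hTSe : T = Se \ {s(u',v')})
    (hmem'' : s(u',v') ∈ Se) (hne' : u' ≠ v')
    (hZ : ∀ z : V, f {y | (SimpleGraph.fromEdgeSet Se).Reachable z y} = 0)
    (hbridge : ¬ (SimpleGraph.fromEdgeSet Se).Reachable u v)
    (hr' : ¬ (SimpleGraph.fromEdgeSet T).Reachable u' v')
    (h1 : (SimpleGraph.fromEdgeSet T).Reachable v u')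
    (hB : f {y | (SimpleGraph.fromEdgeSet T).Reachable v y} = 1) :
    ∃ z, f {y | (SimpleGraph.fromEdgeSet S').Reachable z y} = 1 := by
  by_cases h2 : (SimpleGraph.fromEdgeSet T).Reachable u v'
  · -- both endpoints of `s(u',v')` join the components of `u` and `v`:
    -- contradicts that `s(u,v)` is a bridge
    exfalso
    apply hbridge
    have m1 : (SimpleGraph.fromEdgeSet Se).Reachable u v' :=
      reach_mono'' Se u' v' (by rw [← hTSe]; exact h2)
    have m3 : (SimpleGraph.fromEdgeSet Se).Reachable u' v :=
      reach_mono'' Se u' v' (by rw [← hTSe]; exact h1.symm)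
    have hadj : (SimpleGraph.fromEdgeSet Se).Adj v' u' := by
      rw [fromEdgeSet_adj]
      refine ⟨?_, hne'.symm⟩
      rw [Sym2.eq_swap]
      exact hmem''
    exact (m1.trans hadj.reachable).trans m3
  · by_cases h3 : (SimpleGraph.fromEdgeSet T).Reachable v v'
    · exact absurd (h1.symm.trans h3) hr'
    · -- the far side `C` of `s(u',v')` gets `f C = 1` and survives in `S'`
      have hsplit : {y | (SimpleGraph.fromEdgeSet Se).Reachable v y} =
          {y | (SimpleGraph.fromEdgeSet T).Reachable v y} ∪
          {y | (SimpleGraph.fromEdgeSet T).Reachable v' y} := by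
        have h := comp_union_of_reach' Se u' v' hmem'' hne' (x := v) (by rw [← hTSe]; exact h1)
        rw [← hTSe] at h
        exact h
      have hZ' := hZ v
      rw [hsplit] at hZ'
      have hC1 : f {y | (SimpleGraph.fromEdgeSet T).Reachable v' y} = 1 :=
        f_one hrange hsymm hdisj (reach_disj' h3) hB hZ'
      have hfinal : {y | (SimpleGraph.fromEdgeSet S').Reachable v' y} =
          {y | (SimpleGraph.fromEdgeSet T).Reachable v' y} := by
        have h := comp_eq_of_not_reach' S' u v (x := v')
          (by rw [← hTS']; exact fun hc => h2 hc.symm)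
          (by rw [← hTS']; exact fun hc => h3 hc.symm)
        rw [← hTS'] at h
        exact h
      exact ⟨v', by rw [hfinal]; exact hC1⟩

/-- The hard direction of pruned-set stability: if some component of
`(V, F \ {e, e'})` has `f = 1` and touches the deleted edge `s(u,v) = e`,
then some component of `(V, F \ {e'})` has `f = 1`. -/
private lemma key (hrange : ∀ S : Set V, f S = 0 ∨ f S = 1)
    (hsymm : ∀ S : Set V, f S = f Sᶜ)
    (hdisj : ∀ A B : Set V, Disjoint A B → f A = 0 → f B = 0 → f (A ∪ B) = 0)
    (S' Se T : Set (Sym2 V)) (u v u' v' x : V)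
    (hTS' : T = S' \ {s(u,v)}) (hTSe : T = Se \ {s(u',v')})
    (hmem' : s(u,v) ∈ S') (hne : u ≠ v)
    (hmem'' : s(u',v') ∈ Se) (hne' : u' ≠ v')
    (hZ : ∀ z : V, f {y | (SimpleGraph.fromEdgeSet Se).Reachable z y} = 0)
    (hbridge : ¬ (SimpleGraph.fromEdgeSet Se).Reachable u v)
    (hxu : (SimpleGraph.fromEdgeSet T).Reachable x u)
    (hx : f {y | (SimpleGraph.fromEdgeSet T).Reachable x y} = 1) :
    ∃ z, f {y | (SimpleGraph.fromEdgeSet S').Reachable z y} = 1 := by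
  by_cases hr' : (SimpleGraph.fromEdgeSet T).Reachable u' v'
  · -- then `fromEdgeSet Se` and `fromEdgeSet T` have the same components
    exfalso
    have h : {y | (SimpleGraph.fromEdgeSet Se).Reachable x y} =
        {y | (SimpleGraph.fromEdgeSet T).Reachable x y} := by
      have h := comp_eq_of_reach_both' Se u' v' (x := x) (by rw [← hTSe]; exact hr')
      rw [← hTSe] at h
      exact h
    have h0 := hZ x
    rw [h, hx] at h0
    exact one_ne_zero h0
  · have hTuv : ¬ (SimpleGraph.fromEdgeSet T).Reachable u v := fun hc =>
      hbridge (reach_mono'' Se u' v' (by rw [← hTSe]; exact hc))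
    have hA : f {y | (SimpleGraph.fromEdgeSet T).Reachable u y} = 1 := by
      rw [← reach_set_eq' hxu]; exact hx
    have hsplit : {y | (SimpleGraph.fromEdgeSet S').Reachable u y} =
        {y | (SimpleGraph.fromEdgeSet T).Reachable u y} ∪
        {y | (SimpleGraph.fromEdgeSet T).Reachable v y} := by
      have h := comp_union_of_reach' S' u v hmem' hne (x := u)
        (by rw [← hTS'])
      rw [← hTS'] at h
      exact h
    rcases hrange ({y | (SimpleGraph.fromEdgeSet T).Reachable u y} ∪
        {y | (SimpleGraph.fromEdgeSet T).Reachable v y}) with h0 | h1'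
    · have hB : f {y | (SimpleGraph.fromEdgeSet T).Reachable v y} = 1 :=
        f_one hrange hsymm hdisj (reach_disj' hTuv) hA h0
      by_cases h1 : (SimpleGraph.fromEdgeSet T).Reachable v u'
      · exact key2 hrange hsymm hdisj S' Se T u v u' v' hTS' hTSe hmem'' hne' hZ hbridge hr' h1 hB
      · by_cases h1b : (SimpleGraph.fromEdgeSet T).Reachable v v'
        · refine key2 hrange hsymm hdisj S' Se T u v v' u' hTS' ?_ ?_ hne'.symm hZ hbridge
            (fun hc => hr' hc.symm) h1b hB
          · rw [hTSe, Sym2.eq_swap]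
          · rw [Sym2.eq_swap]; exact hmem''
        · -- the edge `s(u',v')` does not touch the component of `v`: contradiction
          exfalso
          have h : {y | (SimpleGraph.fromEdgeSet Se).Reachable v y} =
              {y | (SimpleGraph.fromEdgeSet T).Reachable v y} := by
            have h := comp_eq_of_not_reach' Se u' v' (x := v)
              (by rw [← hTSe]; exact h1) (by rw [← hTSe]; exact h1b)
            rw [← hTSe] at h
            exact h
          have h0 := hZ v
          rw [h, hB] at h0
          exact one_ne_zero h0
    · exact ⟨u, by rw [hsplit]; exact h1'⟩

end key

/-- Lemma 2 of the paper: let `F` be a forest edge set on a finite vertex set `V`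
and `f` a correct constraint function (values in `{0,1}`, `f V = 0`, symmetry,
disjunctivity) with `f C = 0` for every connected component `C` of `(V, F)`.
Define the pruned edge set
`F' = {e ∈ F | some connected component N of (V, F \ {e}) satisfies f N = 1}`.
Then every connected component `N` of `(V, F')` satisfies `f N = 0`. -/
theorem stmt_4 {V : Type*} [Fintype V] (F : Set (Sym2 V)) (f : Set V → ℕ)
    (hforest : (SimpleGraph.fromEdgeSet F).IsAcyclic)
    (hrange : ∀ S : Set V, f S = 0 ∨ f S = 1)
    (hV : f Set.univ = 0)
    (hsymm : ∀ S : Set V, f S = f Sᶜ)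
    (hdisj : ∀ A B : Set V, Disjoint A B → f A = 0 → f B = 0 → f (A ∪ B) = 0)
    (hcomp : ∀ C : (SimpleGraph.fromEdgeSet F).ConnectedComponent, f C.supp = 0)
    (F' : Set (Sym2 V))
    (hF' : F' = {e ∈ F |
      ∃ N : (SimpleGraph.fromEdgeSet (F \ {e})).ConnectedComponent, f N.supp = 1}) :
    ∀ N : (SimpleGraph.fromEdgeSet F').ConnectedComponent, f N.supp = 0 := by
  subst hF'
  suffices H : ∀ (n : ℕ) (F : Set (Sym2 V)),
      F.ncard = n → (SimpleGraph.fromEdgeSet F).IsAcyclic →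
      (∀ C : (SimpleGraph.fromEdgeSet F).ConnectedComponent, f C.supp = 0) →
      ∀ N : (SimpleGraph.fromEdgeSet {e ∈ F |
        ∃ N : (SimpleGraph.fromEdgeSet (F \ {e})).ConnectedComponent,
          f N.supp = 1}).ConnectedComponent, f N.supp = 0 by
    exact H F.ncard F rfl hforest hcomp
  clear hforest hcomp F
  intro n
  induction n using Nat.strong_induction_on with
  | _ n IH =>
  intro F hn hforest hcomp
  by_cases hFF : {e ∈ F | ∃ N : (SimpleGraph.fromEdgeSet (F \ {e})).ConnectedComponent,
      f N.supp = 1} = F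
  · rw [hFF]; exact hcomp
  · have hex : ∃ e ∈ F, e ∉ {e ∈ F |
        ∃ N : (SimpleGraph.fromEdgeSet (F \ {e})).ConnectedComponent, f N.supp = 1} := by
      by_contra h
      push_neg at h
      exact hFF (Set.Subset.antisymm (fun e he => he.1) h)
    obtain ⟨e, heF, heF'⟩ := hex
    have hZ : ∀ x : V, f {y | (SimpleGraph.fromEdgeSet (F \ {e})).Reachable x y} = 0 := by
      intro x
      rcases hrange {y | (SimpleGraph.fromEdgeSet (F \ {e})).Reachable x y} with h | h
      · exact h
      · exact absurd ⟨heF, (exists_comp_one _ f).mpr ⟨x, h⟩⟩ heF'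
    have hcomp1 := (forall_comp_zero (SimpleGraph.fromEdgeSet (F \ {e})) f).mpr hZ
    have hlt : (F \ {e}).ncard < n :=
      hn ▸ Set.ncard_diff_singleton_lt_of_mem heF (Set.toFinite F)
    have IH1 := IH _ hlt (F \ {e}) rfl
      (acyclic_mono' (fromEdgeSet_mono Set.diff_subset) hforest) hcomp1
    obtain ⟨u, v, rfl⟩ : ∃ a b, e = s(a, b) := Sym2.ind (fun a b => ⟨a, b, rfl⟩) e
    have hkey : {e' ∈ F \ {s(u,v)} |
        ∃ N : (SimpleGraph.fromEdgeSet ((F \ {s(u,v)}) \ {e'})).ConnectedComponent,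
          f N.supp = 1}
        = {e ∈ F | ∃ N : (SimpleGraph.fromEdgeSet (F \ {e})).ConnectedComponent,
            f N.supp = 1} := by
      ext e'
      obtain ⟨u', v', rfl⟩ : ∃ a b, e' = s(a, b) := Sym2.ind (fun a b => ⟨a, b, rfl⟩) e'
      simp only [Set.mem_setOf_eq, Set.mem_diff, Set.mem_singleton_iff, exists_comp_one]
      by_cases huv : u = v
      · -- the removed edge is a diagonal: removing it does not change the graph
        subst huv
        have hdg : ∀ (X : Set (Sym2 V)),
            SimpleGraph.fromEdgeSet (X \ {s(u,u)}) = SimpleGraph.fromEdgeSet X :=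
          fun X => fromEdgeSet_diff_diag' X (Sym2.mk_isDiag_iff.mpr rfl)
        constructor
        · rintro ⟨⟨h1, _⟩, x, hx⟩
          refine ⟨h1, x, ?_⟩
          rw [Set.diff_diff_comm, hdg] at hx
          exact hx
        · rintro ⟨h1, x, hx⟩
          have hne2 : s(u',v') ≠ s(u,u) := by
            intro heq
            rw [heq] at hx
            exact heF' ⟨heF, (exists_comp_one _ f).mpr ⟨x, hx⟩⟩
          refine ⟨⟨h1, hne2⟩, x, ?_⟩
          rw [Set.diff_diff_comm, hdg]
          exact hx
      · -- the removed edge is a real edge; it is a bridge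
        have hbridge : ¬ (SimpleGraph.fromEdgeSet (F \ {s(u,v)})).Reachable u v := by
          have hbr := isAcyclic_iff_forall_edge_isBridge.mp hforest (e := s(u,v))
            (by rw [edgeSet_fromEdgeSet]; exact ⟨heF, by simp [huv]⟩)
          have h2 := isBridge_iff.mp hbr
          rw [deleteEdges, ← fromEdgeSet_sdiff] at h2
          exact h2
        constructor
        · -- hard direction
          rintro ⟨⟨h1, h2⟩, x, hx⟩
          refine ⟨h1, ?_⟩
          by_cases hdiag' : u' = v'
          · exfalso
            subst hdiag'
            rw [fromEdgeSet_diff_diag' _ (Sym2.mk_isDiag_iff.mpr rfl)] at hx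
            have h0 := hZ x
            rw [hx] at h0
            exact one_ne_zero h0
          · by_cases hxu :
                (SimpleGraph.fromEdgeSet ((F \ {s(u,v)}) \ {s(u',v')})).Reachable x u
            · exact key hrange hsymm hdisj (F \ {s(u',v')}) (F \ {s(u,v)})
                ((F \ {s(u,v)}) \ {s(u',v')}) u v u' v' x Set.diff_diff_comm rfl
                (by simp only [Set.mem_diff, Set.mem_singleton_iff]
                    exact ⟨heF, fun hc => h2 hc.symm⟩)
                huv (by simp only [Set.mem_diff, Set.mem_singleton_iff]; exact ⟨h1, h2⟩)
                hdiag' hZ hbridge hxu hx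
            · by_cases hxv :
                  (SimpleGraph.fromEdgeSet ((F \ {s(u,v)}) \ {s(u',v')})).Reachable x v
              · refine key hrange hsymm hdisj (F \ {s(u',v')}) (F \ {s(u,v)})
                  ((F \ {s(u,v)}) \ {s(u',v')}) v u u' v' x ?_ rfl ?_
                  (fun h => huv h.symm)
                  (by simp only [Set.mem_diff, Set.mem_singleton_iff]; exact ⟨h1, h2⟩)
                  hdiag' hZ (fun h => hbridge h.symm) hxv hx
                · rw [show s(v,u) = s(u,v) from Sym2.eq_swap]
                  exact Set.diff_diff_comm
                · rw [show s(v,u) = s(u,v) from Sym2.eq_swap]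
                  simp only [Set.mem_diff, Set.mem_singleton_iff]
                  exact ⟨heF, fun hc => h2 hc.symm⟩
              · -- the component of x is untouched by the edge s(u,v)
                refine ⟨x, ?_⟩
                have h := comp_eq_of_not_reach' (F \ {s(u',v')}) u v (x := x)
                  (by rw [Set.diff_diff_comm]; exact hxu)
                  (by rw [Set.diff_diff_comm]; exact hxv)
                rw [h, Set.diff_diff_comm]
                exact hx
        · -- easy direction
          rintro ⟨h1, x, hx⟩
          have hne2 : s(u',v') ≠ s(u,v) := by
            intro heq
            rw [heq] at hx
            exact heF' ⟨heF, (exists_comp_one _ f).mpr ⟨x, hx⟩⟩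
          refine ⟨⟨h1, hne2⟩, ?_⟩
          have hmem2 : s(u,v) ∈ F \ {s(u',v')} := by
            simp only [Set.mem_diff, Set.mem_singleton_iff]
            exact ⟨heF, fun hc => hne2 hc.symm⟩
          by_cases huvR :
              (SimpleGraph.fromEdgeSet ((F \ {s(u',v')}) \ {s(u,v)})).Reachable u v
          · refine ⟨x, ?_⟩
            have h := comp_eq_of_reach_both' (F \ {s(u',v')}) u v (x := x) huvR
            rw [Set.diff_diff_comm, ← h]
            exact hx
          · by_cases hxu :
                (SimpleGraph.fromEdgeSet ((F \ {s(u',v')}) \ {s(u,v)})).Reachable x u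
            · have hsplit := comp_union_of_reach' (F \ {s(u',v')}) u v hmem2 huv hxu
              rcases hrange {y |
                  (SimpleGraph.fromEdgeSet ((F \ {s(u',v')}) \ {s(u,v)})).Reachable x y}
                  with hA0 | hA1
              · have hB1 : f {y |
                    (SimpleGraph.fromEdgeSet ((F \ {s(u',v')}) \ {s(u,v)})).Reachable v y}
                    = 1 :=
                  f_one' hrange hdisj
                    (reach_disj' (fun hc => huvR (hxu.symm.trans hc)))
                    hA0 (by rw [← hsplit]; exact hx)
                exact ⟨v, by rw [Set.diff_diff_comm]; exact hB1⟩
              · exact ⟨x, by rw [Set.diff_diff_comm]; exact hA1⟩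
            · by_cases hxv :
                  (SimpleGraph.fromEdgeSet ((F \ {s(u',v')}) \ {s(u,v)})).Reachable x v
              · have hswap : s(v,u) = s(u,v) := Sym2.eq_swap
                have hmem2' : s(v,u) ∈ F \ {s(u',v')} := by rw [hswap]; exact hmem2
                have hsplit := comp_union_of_reach' (F \ {s(u',v')}) v u hmem2'
                  (fun h => huv h.symm) (x := x) (by rw [hswap]; exact hxv)
                rw [hswap] at hsplit
                rcases hrange {y |
                    (SimpleGraph.fromEdgeSet ((F \ {s(u',v')}) \ {s(u,v)})).Reachable x y}
                    with hA0 | hA1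
                · have hB1 : f {y |
                      (SimpleGraph.fromEdgeSet ((F \ {s(u',v')}) \ {s(u,v)})).Reachable u y}
                      = 1 :=
                    f_one' hrange hdisj
                      (reach_disj' (fun hc => huvR (hc.symm.trans hxv)))
                      hA0 (by rw [← hsplit]; exact hx)
                  exact ⟨u, by rw [Set.diff_diff_comm]; exact hB1⟩
                · exact ⟨x, by rw [Set.diff_diff_comm]; exact hA1⟩
              · refine ⟨x, ?_⟩
                have h := comp_eq_of_not_reach' (F \ {s(u',v')}) u v (x := x) hxu hxv
                rw [Set.diff_diff_comm, ← h]
                exact hx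
    rw [hkey] at IH1
    exact IH1
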